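/- arXiv:cond-mat/0610583 — 3 statements merged into one kernel-verified Lean document; each statement's English description precedes it below -/
import Mathlib

section
/- Let a, b, c be nonzero complex numbers. The pair of linear equations (b - c - a*b)*h + (-b - a*c)*i = 0 and (-b - a*c)*h + (b - c - a*b)*i = 0 holds for every pair (h, i) of complex numbers if and only if b = c + a*b and b = -a*c. Moreover, if b = c + a*b and b = -a*c (with c nonzero), then a^2 = a + 1, and hence a = φ or a = -1/φ, where φ = (1+√5)/2. -/
/-- For nonzero complex `a b c`, the linear system
`(b - c - a*b)*h + (-b - a*c)*i = 0` and `(-b - a*c)*h + (b - c - a*b)*i = 0`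
holds for all `(h, i)` iff `b = c + a*b` and `b = -a*c`; moreover these two
relations force `a^2 = a + 1`, hence `a = φ` or `a = -1/φ` with `φ = (1+√5)/2`. -/
theorem stmt_0 (a b c : ℂ) (ha : a ≠ 0) (hb : b ≠ 0) (hc : c ≠ 0) :
    ((∀ h i : ℂ, (b - c - a * b) * h + (-b - a * c) * i = 0 ∧
        (-b - a * c) * h + (b - c - a * b) * i = 0) ↔
      (b = c + a * b ∧ b = -(a * c))) ∧
    (b = c + a * b → b = -(a * c) →
      a ^ 2 = a + 1 ∧
        (a = (((1 + Real.sqrt 5) / 2 : ℝ) : ℂ) ∨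
          a = -1 / (((1 + Real.sqrt 5) / 2 : ℝ) : ℂ))) := by
  constructor
  · constructor
    · intro H
      have h1 := (H 1 0).1
      have h2 := (H 0 1).1
      constructor <;> [linear_combination h1; linear_combination -h2]
    · rintro ⟨h1, h2⟩ h i
      constructor <;> [linear_combination h * h1 - i * h2; linear_combination i * h1 - h * h2]
  · intro h1 h2
    have key : a ^ 2 = a + 1 := by
      have : b * (a ^ 2 - a - 1) = 0 := by linear_combination -h2 - a * h1
      rcases mul_eq_zero.mp this with h | h
      · exact absurd h hb
      · linear_combination h
    refine ⟨key, ?_⟩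
    have s5 : (Real.sqrt 5 : ℂ) ^ 2 = 5 := by
      norm_cast
      rw [Real.sq_sqrt] <;> norm_num
    have : (a - (((1 + Real.sqrt 5) / 2 : ℝ) : ℂ)) *
        (a - (((1 - Real.sqrt 5) / 2 : ℝ) : ℂ)) = 0 := by
      push_cast
      linear_combination key - s5 / 4
    rcases mul_eq_zero.mp this with h | h
    · left; linear_combination h
    · right
      rw [sub_eq_zero] at h
      have hφ : (((1 + Real.sqrt 5) / 2 : ℝ) : ℂ) ≠ 0 := by
        norm_cast
        positivity
      rw [h, eq_div_iff hφ]
      push_cast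
      linear_combination -s5 / 4
end

section
/- Let φ = (1+√5)/2 and let F be the 2×2 real matrix with rows (φ^{-1}, φ^{-1/2}) and (φ^{-1/2}, -φ^{-1}). Then F is symmetric (F = Fᵀ) and F is an involution (F * F = 1); in particular F is an orthogonal (unitary) matrix. -/
/-- The Fibonacci F-matrix `!![φ⁻¹, φ^{-1/2}; φ^{-1/2}, -φ⁻¹]`
(with `φ = (1+√5)/2`) is symmetric and an involution, hence orthogonal. -/
theorem stmt_3 :
    let φ : ℝ := (1 + Real.sqrt 5) / 2
    let F : Matrix (Fin 2) (Fin 2) ℝ :=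
      !![φ⁻¹, (Real.sqrt φ)⁻¹; (Real.sqrt φ)⁻¹, -φ⁻¹]
    F = F.transpose ∧ F * F = 1 := by
  intro φ F
  have h5 : Real.sqrt 5 ^ 2 = 5 := Real.sq_sqrt (by norm_num)
  have hφpos : 0 < φ := by
    have : 0 < Real.sqrt 5 := Real.sqrt_pos.mpr (by norm_num)
    unfold φ; linarith
  have hsq : Real.sqrt φ ^ 2 = φ := Real.sq_sqrt hφpos.le
  have hφ2 : φ ^ 2 = φ + 1 := by
    unfold φ; ring_nf; nlinarith [h5]
  have key : φ⁻¹ * φ⁻¹ + (Real.sqrt φ)⁻¹ * (Real.sqrt φ)⁻¹ = 1 := by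
    have hs : (Real.sqrt φ)⁻¹ * (Real.sqrt φ)⁻¹ = φ⁻¹ := by
      rw [← mul_inv]
      congr 1
      nlinarith [hsq]
    rw [hs]
    field_simp
    nlinarith [hφ2]
  constructor
  · ext i j; fin_cases i <;> fin_cases j <;> simp [F, Matrix.transpose]
  · ext i j
    fin_cases i <;> fin_cases j <;>
      simp [F, Matrix.mul_apply, Fin.sum_univ_two, Matrix.one_apply] <;>
      linarith [key]
end

section
/- Let G be a simple graph on a finite vertex set V with edge set E, let Q be a positive integer, and let γ be a real number. Then the sum over all spin configurations σ : V → {0, 1, …, Q-1} of the product over all edges {i,j} ∈ E of (1 + γ·δ_{σ(i), σ(j)}) equals the sum over all subsets A ⊆ E of Q^{c(A)} · γ^{|A|}, where c(A) is the number of connected components of the spanning subgraph of G with vertex set V and edge set A (isolated vertices count as components). -/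
set_option maxHeartbeats 1000000


/-- The Potts edge weight `1 + γ·δ_{σ(i),σ(j)}`, as a well-defined function on
unordered pairs `Sym2 V`. -/
noncomputable def pottsEdgeWeight {V : Type*} {Q : ℕ} (γ : ℝ) (σ : V → Fin Q) :
    Sym2 V → ℝ :=
  Sym2.lift ⟨fun i j => 1 + γ * (if σ i = σ j then 1 else 0),
    fun i j => by by_cases h : σ i = σ j <;> simp [h, eq_comm]⟩

/-- `σ` takes equal values on an unordered pair. -/
def sym2Eq {V : Type*} {Q : ℕ} (σ : V → Fin Q) : Sym2 V → Prop :=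
  Sym2.lift ⟨fun i j => σ i = σ j, fun i j => propext ⟨Eq.symm, Eq.symm⟩⟩

instance sym2Eq.decidablePred {V : Type*} {Q : ℕ} (σ : V → Fin Q) :
    DecidablePred (sym2Eq σ) := fun e =>
  Quot.recOnSubsingleton e fun p => decidable_of_iff (σ p.1 = σ p.2) Iff.rfl

lemma pottsEdgeWeight_eq {V : Type*} {Q : ℕ} (γ : ℝ) (σ : V → Fin Q) (e : Sym2 V) :
    pottsEdgeWeight γ σ e = 1 + γ * (if sym2Eq σ e then 1 else 0) := by
  induction e using Sym2.ind with
  | _ i j =>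
    show 1 + γ * (if σ i = σ j then (1:ℝ) else 0) = _
    by_cases h : σ i = σ j
    · rw [if_pos h, if_pos (show sym2Eq σ s(i, j) from h)]
    · rw [if_neg h, if_neg (show ¬ sym2Eq σ s(i, j) from h)]

lemma walk_const {V : Type*} {Q : ℕ} {H : SimpleGraph V} {σ : V → Fin Q}
    (h : ∀ v w, H.Adj v w → σ v = σ w) : ∀ {v w : V}, H.Walk v w → σ v = σ w := by
  intro v w p
  induction p with
  | nil => rfl
  | cons ha _ ih => exact (h _ _ ha).trans ih

/-- Compatible spin configurations correspond to colourings of connected components. -/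
noncomputable def compatEquiv {V : Type*} {Q : ℕ} (H : SimpleGraph V) :
    {σ : V → Fin Q // ∀ v w, H.Adj v w → σ v = σ w} ≃ (H.ConnectedComponent → Fin Q) where
  toFun σ := SimpleGraph.ConnectedComponent.lift σ.1
    (fun v w p _ => walk_const σ.2 p)
  invFun f := ⟨fun v => f (H.connectedComponentMk v), fun v w h =>
    congrArg f (SimpleGraph.ConnectedComponent.sound h.reachable)⟩
  left_inv σ := rfl
  right_inv f := funext fun c => c.ind fun v => rfl

lemma count_compat {V : Type*} [Fintype V] [DecidableEq V] {Q : ℕ} (A : Finset (Sym2 V))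
    (hA : ∀ e ∈ A, ¬ e.IsDiag) :
    ((Finset.univ.filter
        (fun σ : V → Fin Q => ∀ e ∈ A, sym2Eq σ e)).card : ℝ)
      = (Q : ℝ) ^ (Nat.card (SimpleGraph.fromEdgeSet (↑A : Set (Sym2 V))).ConnectedComponent) := by
  set H := SimpleGraph.fromEdgeSet (↑A : Set (Sym2 V))
  have hiff : ∀ σ : V → Fin Q,
      (∀ e ∈ A, sym2Eq σ e) ↔ (∀ v w, H.Adj v w → σ v = σ w) := by
    intro σ
    constructor
    · intro h v w hvw
      rw [SimpleGraph.fromEdgeSet_adj] at hvw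
      exact h _ hvw.1
    · intro h e he
      induction e using Sym2.ind with
      | _ i j =>
        by_cases hij : i = j
        · subst hij; exact rfl
        · exact h i j (by rw [SimpleGraph.fromEdgeSet_adj]; exact ⟨he, hij⟩)
  have h1 : (Finset.univ.filter
        (fun σ : V → Fin Q => ∀ e ∈ A, sym2Eq σ e)).card
      = Nat.card {σ : V → Fin Q // ∀ e ∈ A, sym2Eq σ e} := by
    rw [Nat.card_eq_fintype_card, Fintype.card_subtype]
  rw [h1, Nat.card_congr ((Equiv.subtypeEquivRight hiff).trans (compatEquiv H)),
    Nat.card_fun, Nat.card_eq_fintype_card (α := Fin Q), Fintype.card_fin]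
  push_cast
  rfl

/-- Fortuin–Kasteleyn representation: for a finite simple graph
`G`, a positive integer `Q` and real `γ`,
`∑_{σ : V → {0,…,Q-1}} ∏_{{i,j} ∈ E} (1 + γ δ_{σ i, σ j})
  = ∑_{A ⊆ E} Q^{c(A)} γ^{|A|}`,
where `c(A)` is the number of connected components of the spanning subgraph
with edge set `A` (isolated vertices count as components). -/
theorem stmt_10 {V : Type*} [Fintype V] [DecidableEq V]
    (G : SimpleGraph V) [DecidableRel G.Adj] (Q : ℕ) (hQ : 0 < Q) (γ : ℝ) :
    ∑ σ : V → Fin Q, ∏ e ∈ G.edgeFinset, pottsEdgeWeight γ σ e =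
      ∑ A ∈ G.edgeFinset.powerset,
        (Q : ℝ) ^ (Nat.card (SimpleGraph.fromEdgeSet (↑A : Set (Sym2 V))).ConnectedComponent)
          * γ ^ A.card := by
  have expand : ∀ σ : V → Fin Q,
      ∏ e ∈ G.edgeFinset, pottsEdgeWeight γ σ e
        = ∑ A ∈ G.edgeFinset.powerset,
            γ ^ A.card * ∏ e ∈ A, (if sym2Eq σ e then (1:ℝ) else 0) := by
    intro σ
    have : ∏ e ∈ G.edgeFinset, pottsEdgeWeight γ σ e
        = ∏ e ∈ G.edgeFinset,
            ((fun e => γ * (if sym2Eq σ e then (1:ℝ) else 0)) e + (fun _ => (1:ℝ)) e) := by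
      apply Finset.prod_congr rfl
      intro e _
      rw [pottsEdgeWeight_eq]
      ring
    rw [this, Finset.prod_add]
    apply Finset.sum_congr rfl
    intro A _
    rw [Finset.prod_const_one, mul_one, Finset.prod_mul_distrib, Finset.prod_const]
  calc
    ∑ σ : V → Fin Q, ∏ e ∈ G.edgeFinset, pottsEdgeWeight γ σ e
        = ∑ σ : V → Fin Q, ∑ A ∈ G.edgeFinset.powerset,
            γ ^ A.card * ∏ e ∈ A, (if sym2Eq σ e then (1:ℝ) else 0) :=
      Finset.sum_congr rfl fun σ _ => expand σ
    _ = ∑ A ∈ G.edgeFinset.powerset, ∑ σ : V → Fin Q,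
            γ ^ A.card * ∏ e ∈ A, (if sym2Eq σ e then (1:ℝ) else 0) :=
      Finset.sum_comm
    _ = ∑ A ∈ G.edgeFinset.powerset,
          (Q : ℝ) ^ (Nat.card (SimpleGraph.fromEdgeSet (↑A : Set (Sym2 V))).ConnectedComponent)
            * γ ^ A.card := by
      apply Finset.sum_congr rfl
      intro A hA
      rw [Finset.mem_powerset] at hA
      have hdiag : ∀ e ∈ A, ¬ e.IsDiag := fun e he =>
        SimpleGraph.not_isDiag_of_mem_edgeSet G (by
          simpa [SimpleGraph.mem_edgeFinset] using hA he)
      rw [← Finset.mul_sum]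
      rw [mul_comm]
      congr 1
      simp only [Finset.prod_boole]
      rw [← count_compat (Q := Q) A hdiag, ← Finset.sum_boole]
      exact Finset.sum_congr rfl fun σ _ => by congr
end
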